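/- Let u : ℝ → ℝ → ℝ be a classical solution of the replicator–mutator equation on [α,β] with Neumann boundary conditions, with u and its partial derivatives up to the orders appearing in the equation jointly continuous. Define m(t) := ∫_α^β u(t,x) dx and S(t) := ∫_α^β σ(x) u(t,x) dx. Then m is differentiable with m'(t) = a·S(t)·(1 − m(t)) for all t ≥ 0; consequently, if m(0) = 1 then m(t) = 1 for all t ≥ 0 (total mass is conserved, so a probability density stays a probability density). -/

import Mathlib

open MeasureTheory Set

/-- Mass conservation for the replicator–mutator equation: for a classical solution `u`
(with joint continuity of `u` and the relevant partial derivatives), the total mass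
`m(t) = ∫_α^β u(t,x) dx` satisfies `m'(t) = a·S(t)·(1 − m(t))` where
`S(t) = ∫_α^β σ(x) u(t,x) dx`; hence `m(0) = 1` implies `m(t) = 1` for all `t ≥ 0`. -/
theorem replicator_mutator_mass_conservation
    (α β a c : ℝ) (hαβ : α < β) (ha : 0 < a) (hc : 0 < c)
    (σ : ℝ → ℝ) (hσ : Continuous σ)
    (u : ℝ → ℝ → ℝ)
    (hu_t : ∀ x, ContDiff ℝ 1 (fun t => u t x))
    (hu_x : ∀ t, ContDiff ℝ 2 (fun x => u t x))
    (hu_cont : Continuous fun p : ℝ × ℝ => u p.1 p.2)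
    (hut_cont : Continuous fun p : ℝ × ℝ => deriv (fun s => u s p.2) p.1)
    (huxx_cont : Continuous fun p : ℝ × ℝ => deriv (deriv (fun y => u p.1 y)) p.2)
    (hpde : ∀ t ≥ (0:ℝ), ∀ x ∈ Icc α β,
      deriv (fun s => u s x) t =
        c * deriv (deriv (fun y => u t y)) x +
        a * (σ x - ∫ y in α..β, σ y * u t y) * u t x)
    (hbcα : ∀ t ≥ (0:ℝ), deriv (fun x => u t x) α = 0)
    (hbcβ : ∀ t ≥ (0:ℝ), deriv (fun x => u t x) β = 0) :
    (∀ t ≥ (0:ℝ),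
      HasDerivAt (fun s => ∫ x in α..β, u s x)
        (a * (∫ x in α..β, σ x * u t x) * (1 - ∫ x in α..β, u t x)) t) ∧
    ((∫ x in α..β, u 0 x) = 1 → ∀ t ≥ (0:ℝ), (∫ x in α..β, u t x) = 1) := by
  set S : ℝ → ℝ := fun t => ∫ x in α..β, σ x * u t x with hSdef
  set m : ℝ → ℝ := fun t => ∫ x in α..β, u t x with hmdef
  have hu_cont' : ∀ t, Continuous fun x => u t x := fun t =>
    hu_cont.comp (continuous_const.prodMk continuous_id)
  -- step 1: derivative under integral sign, for every t₀
  have key : ∀ t₀ : ℝ, HasDerivAt m (∫ x in α..β, deriv (fun s => u s x) t₀) t₀ := by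
    intro t₀
    obtain ⟨C, hC⟩ := (isCompact_Icc.prod isCompact_Icc :
        IsCompact (Icc (t₀ - 1) (t₀ + 1) ×ˢ Icc α β)).exists_bound_of_continuousOn
      hut_cont.continuousOn
    have h := intervalIntegral.hasDerivAt_integral_of_dominated_loc_of_deriv_le
      (F := fun s x => u s x) (F' := fun s x => deriv (fun s' => u s' x) s)
      (a := α) (b := β) (x₀ := t₀) (bound := fun _ => C) (μ := volume)
      (s := Metric.ball t₀ 1) (Metric.ball_mem_nhds t₀ one_pos)
      (Filter.Eventually.of_forall fun s => (hu_cont' s).aestronglyMeasurable)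
      ((hu_cont' t₀).intervalIntegrable α β)
      ((hut_cont.comp (continuous_const.prodMk continuous_id) :
        Continuous fun x => deriv (fun s' => u s' x) t₀).aestronglyMeasurable)
      ?_ (intervalIntegrable_const) ?_
    · exact h.2
    · refine Filter.Eventually.of_forall fun x hx s hs => hC (s, x) ⟨?_, ?_⟩
      · have := Metric.mem_ball.mp hs
        rw [Real.dist_eq] at this
        constructor <;> [linarith [abs_lt.mp this]; linarith [abs_lt.mp this]]
      · rw [uIoc_of_le hαβ.le] at hx
        exact Ioc_subset_Icc_self hx
    · refine Filter.Eventually.of_forall fun x hx s hs => ?_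
      exact (((hu_t x).differentiable one_ne_zero) s).hasDerivAt
  -- regularity in x
  have hderiv2 : ∀ t, ContDiff ℝ 1 (deriv (fun y => u t y)) := by
    intro t
    have h2 : ContDiff ℝ (1 + 1 : ℕ) (fun x => u t x) := by
      exact_mod_cast hu_x t
    exact (contDiff_succ_iff_deriv.mp h2).2.2
  have huxx_cont' : ∀ t, Continuous (deriv (deriv (fun y => u t y))) := fun t =>
    huxx_cont.comp (continuous_const.prodMk continuous_id)
  -- step 2: value of the derivative for t ≥ 0
  have hkey2 : ∀ t ≥ (0:ℝ),
      (∫ x in α..β, deriv (fun s => u s x) t) = a * S t * (1 - m t) := by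
    intro t ht
    have hcongr : (∫ x in α..β, deriv (fun s => u s x) t)
        = ∫ x in α..β, (c * deriv (deriv (fun y => u t y)) x
            + a * (σ x - S t) * u t x) := by
      apply intervalIntegral.integral_congr
      intro x hx
      rw [uIcc_of_le hαβ.le] at hx
      exact hpde t ht x hx
    have hint1 : IntervalIntegrable (fun x => c * deriv (deriv (fun y => u t y)) x)
        volume α β := (continuous_const.mul (huxx_cont' t)).intervalIntegrable α β
    have hint2 : IntervalIntegrable (fun x => a * (σ x - S t) * u t x) volume α β :=
      ((continuous_const.mul (hσ.sub continuous_const)).mul (hu_cont' t)).intervalIntegrable α β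
    rw [hcongr, intervalIntegral.integral_add hint1 hint2]
    have hfund : (∫ x in α..β, deriv (deriv (fun y => u t y)) x) = 0 := by
      rw [intervalIntegral.integral_deriv_eq_sub
        (fun x _ => ((hderiv2 t).differentiable one_ne_zero) x)
        ((huxx_cont' t).intervalIntegrable α β), hbcα t ht, hbcβ t ht, sub_zero]
    have h1 : (∫ x in α..β, c * deriv (deriv (fun y => u t y)) x) = 0 := by
      rw [intervalIntegral.integral_const_mul, hfund, mul_zero]
    have h2 : (∫ x in α..β, a * (σ x - S t) * u t x) = a * S t * (1 - m t) := by
      have : (fun x => a * (σ x - S t) * u t x)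
          = fun x => a * (σ x * u t x) - (a * S t) * u t x := by
        funext x; ring
      rw [this, intervalIntegral.integral_sub (f := fun x => a * (σ x * u t x)) (g := fun x => (a * S t) * u t x)
          ((continuous_const.mul (hσ.mul (hu_cont' t))).intervalIntegrable α β)
          ((continuous_const.mul (hu_cont' t)).intervalIntegrable α β),
        intervalIntegral.integral_const_mul, intervalIntegral.integral_const_mul]
      show a * S t - a * S t * m t = _
      ring
    rw [h1, h2, zero_add]
  have main : ∀ t ≥ (0:ℝ), HasDerivAt m (a * S t * (1 - m t)) t := by
    intro t ht
    have := key t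
    rwa [hkey2 t ht] at this
  refine ⟨main, fun hm0 t ht => ?_⟩
  -- step 3: constancy via integrating factor
  have hS_cont : Continuous S := by
    apply intervalIntegral.continuous_parametric_intervalIntegral_of_continuous'
    exact (hσ.comp continuous_snd).mul hu_cont
  set F : ℝ → ℝ := fun t => ∫ s in (0:ℝ)..t, a * S s with hFdef
  have hF : ∀ r : ℝ, HasDerivAt F (a * S r) r := fun r =>
    ((continuous_const.mul hS_cont).integral_hasStrictDerivAt 0 r).hasDerivAt
  set g : ℝ → ℝ := fun t => (m t - 1) * Real.exp (F t) with hgdef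
  have hg : ∀ r ≥ (0:ℝ), HasDerivAt g 0 r := by
    intro r hr
    have h1 : HasDerivAt (fun t => m t - 1) (a * S r * (1 - m r)) r :=
      (main r hr).sub_const 1
    have h2 : HasDerivAt (fun t => Real.exp (F t)) (Real.exp (F r) * (a * S r)) r :=
      (Real.hasDerivAt_exp (F r)).comp r (hF r)
    have : HasDerivAt g (a * S r * (1 - m r) * Real.exp (F r) + (m r - 1) * (Real.exp (F r) * (a * S r))) r :=
      h1.mul h2
    convert this using 1
    ring
  have hgconst := constant_of_has_deriv_right_zero (a := 0) (b := t)
    (f := g) (fun r hr => ((hg r hr.1).continuousAt).continuousWithinAt)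
    (fun r hr => (hg r hr.1).hasDerivWithinAt)
  have hgt : g t = g 0 := hgconst t ⟨ht, le_rfl⟩
  have hg0 : g 0 = 0 := by
    simp only [hgdef]
    have : m 0 = 1 := hm0
    rw [this, sub_self, zero_mul]
  rw [hg0] at hgt
  have hexp : Real.exp (F t) ≠ 0 := Real.exp_ne_zero _
  have := mul_eq_zero.mp hgt
  rcases this with h | h
  · linarith [sub_eq_zero.mp h]
  · exact absurd h hexp
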